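/- Let (F_n) be a sequence of cdfs of Borel probability measures on ℝ satisfying: (1) 0 < F_n(0) → 0 as n → ∞; (2) μ_n := E_{F_n}[X] ≥ μ for a fixed constant μ > 0; (3) there exist constants C, K, M < ∞ such that for every n, E_{F_n}[X²] ≤ C, E_{F_n}[X² | X ≤ 0] ≤ K, and F_n(x+t) − F_n(x) ≤ M·t for all x ≥ 0, t > 0. Define G_n(y) = ∫_{(-∞,y]}(x² − yx) dF_n(x) and let y_n* ≥ 0 be a zero of G_n (G_n(y_n*) = 0). Then F_n(y_n*) ≤ F_n(0) + Θ^{1/3}·F_n(0)^{1/3}, where Θ = 27·(K + C√K/μ)·M²; in particular F_n(y_n*) = O(F_n(0)^{1/3}) → 0 as n → ∞. -/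

import Mathlib

open MeasureTheory Set Filter

private lemma measIocReal (ν : Measure ℝ) [IsProbabilityMeasure ν] {a b : ℝ} (hab : a ≤ b) :
    (ν (Ioc a b)).toReal = (ν (Iic b)).toReal - (ν (Iic a)).toReal := by
  have h : ν (Iic a) + ν (Ioc a b) = ν (Iic b) := by
    rw [← measure_union (Set.Iic_disjoint_Ioc le_rfl) measurableSet_Ioc,
      Set.Iic_union_Ioc_eq_Iic hab]
  rw [← h, ENNReal.toReal_add (measure_ne_top _ _) (measure_ne_top _ _)]
  ring

private lemma aux_bound (ν : Measure ℝ) [IsProbabilityMeasure ν]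
    (hm1 : Integrable (fun x : ℝ => x) ν) (hm2 : Integrable (fun x : ℝ => x ^ 2) ν)
    (m C K M y : ℝ) (hm : 0 < m) (hmean : m ≤ ∫ x, x ∂ν)
    (hC : ∫ x, x ^ 2 ∂ν ≤ C)
    (hK : ∫ x in Iic 0, x ^ 2 ∂ν ≤ K * (ν (Iic 0)).toReal)
    (hF0pos : 0 < (ν (Iic 0)).toReal)
    (hconc : ∀ x t : ℝ, 0 ≤ x → 0 < t →
      (ν (Iic (x + t))).toReal - (ν (Iic x)).toReal ≤ M * t)
    (hy : 0 ≤ y) (hzero : ∫ x in Iic y, (x ^ 2 - y * x) ∂ν = 0) :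
    (ν (Iic y)).toReal ≤ (ν (Iic 0)).toReal +
      (27 * (K + C * Real.sqrt K / m) * M ^ 2) ^ ((1 : ℝ) / 3) *
        ((ν (Iic 0)).toReal) ^ ((1 : ℝ) / 3) := by
  set F0 : ℝ := (ν (Iic 0)).toReal with hF0
  set p : ℝ := (ν (Ioc 0 y)).toReal with hp
  have hIoc0y := measIocReal ν hy
  have hsplitFy : (ν (Iic y)).toReal = F0 + p := by linarith [hIoc0y]
  have hsq_int : (0:ℝ) ≤ ∫ x in Iic (0:ℝ), x ^ 2 ∂ν :=
    setIntegral_nonneg_of_ae (ae_of_all _ fun x => sq_nonneg x)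
  have hK0 : 0 ≤ K := by nlinarith
  have hC0 : 0 ≤ C := le_trans (integral_nonneg fun x => sq_nonneg x) hC
  have hsK : 0 ≤ Real.sqrt K := Real.sqrt_nonneg K
  have hM0 : 0 ≤ M := by
    have h1 := hconc 0 1 le_rfl one_pos
    have h2 : (ν (Iic (0:ℝ))).toReal ≤ (ν (Iic (0+1:ℝ))).toReal :=
      ENNReal.toReal_mono (measure_ne_top _ _) (measure_mono (Iic_subset_Iic.2 (by norm_num)))
    linarith
  have hΘ : 0 ≤ 27 * (K + C * Real.sqrt K / m) * M ^ 2 :=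
    mul_nonneg (mul_nonneg (by norm_num)
      (add_nonneg hK0 (div_nonneg (mul_nonneg hC0 hsK) hm.le))) (sq_nonneg M)
  have hF0nn : 0 ≤ F0 := hF0pos.le
  rw [hsplitFy]
  have hpnn : 0 ≤ p := ENNReal.toReal_nonneg
  rcases hpnn.eq_or_lt with hp0 | hppos
  · have hh : 0 ≤ (27 * (K + C * Real.sqrt K / m) * M ^ 2) ^ ((1:ℝ)/3) * F0 ^ ((1:ℝ)/3) :=
      mul_nonneg (Real.rpow_nonneg hΘ _) (Real.rpow_nonneg hF0nn _)
    linarith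
  -- main case : p > 0
  have hf : Integrable (fun x : ℝ => x ^ 2 - y * x) ν := hm2.sub (hm1.const_mul y)
  have hg : Integrable (fun x : ℝ => y * x - x ^ 2) ν := (hm1.const_mul y).sub hm2
  have hy' : 0 < y := by
    rcases hy.eq_or_lt with h | h
    · exfalso
      have : p = 0 := by rw [hp, ← h, Ioc_self, measure_empty]; simp
      linarith
    · exact h
  have hpy : p ≤ M * y := by
    have h1 := hconc 0 y le_rfl hy'
    rw [zero_add] at h1
    linarith [hIoc0y]
  have hM : 0 < M := by
    by_contra h
    push_neg at h
    nlinarith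
  set δ : ℝ := p / (3 * M) with hδdef
  have hδ : 0 < δ := div_pos hppos (by linarith)
  have hδeq : p = 3 * M * δ := by rw [hδdef]; field_simp
  have hδy : 3 * δ ≤ y := by nlinarith
  -- split the zero identity
  have hsplitG : ∫ x in Iic (0:ℝ), (x ^ 2 - y * x) ∂ν + ∫ x in Ioc (0:ℝ) y, (x ^ 2 - y * x) ∂ν = 0 := by
    rw [← setIntegral_union (Set.Iic_disjoint_Ioc le_rfl) measurableSet_Ioc
      hf.integrableOn hf.integrableOn, Set.Iic_union_Ioc_eq_Iic hy]
    exact hzero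
  have hB : ∫ x in Ioc (0:ℝ) y, (y * x - x ^ 2) ∂ν = ∫ x in Iic (0:ℝ), (x ^ 2 - y * x) ∂ν := by
    have h1 : (fun x : ℝ => y * x - x ^ 2) = fun x : ℝ => -(x ^ 2 - y * x) := by
      funext x; ring
    rw [h1, integral_neg]
    linarith [hsplitG]
  -- A = ∫_{≤0} x² + y ∫_{≤0}(-x)
  have hAeq : ∫ x in Iic (0:ℝ), (x ^ 2 - y * x) ∂ν
      = ∫ x in Iic (0:ℝ), x ^ 2 ∂ν + y * ∫ x in Iic (0:ℝ), (-x) ∂ν := by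
    rw [integral_sub hm2.integrableOn (hm1.const_mul y).integrableOn,
      integral_const_mul, integral_neg]
    ring
  -- bound on the negative-part first moment
  have hNbound : ∀ a : ℝ, 0 < a →
      ∫ x in Iic (0:ℝ), (-x) ∂ν ≤ K * F0 / (2 * a) + a * F0 / 2 := by
    intro a ha
    have h2a : (0:ℝ) < 2 * a := by linarith
    have hmono : ∫ x in Iic (0:ℝ), (-x) ∂ν ≤ ∫ x in Iic (0:ℝ), (x ^ 2 / (2 * a) + a / 2) ∂ν := by
      refine setIntegral_mono_on hm1.neg.integrableOn
        ((hm2.integrableOn.div_const _).add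
          (integrableOn_const (measure_lt_top _ _).ne)) measurableSet_Iic ?_
      intro x _
      have h3 : -x ≤ (x ^ 2 + a ^ 2) / (2 * a) := by
        rw [le_div_iff₀ h2a]; nlinarith [sq_nonneg (x + a)]
      have h4 : (x ^ 2 + a ^ 2) / (2 * a) = x ^ 2 / (2 * a) + a / 2 := by
        field_simp
      linarith
    have hcalc : ∫ x in Iic (0:ℝ), (x ^ 2 / (2 * a) + a / 2) ∂ν
        = (∫ x in Iic (0:ℝ), x ^ 2 ∂ν) / (2 * a) + a * F0 / 2 := by
      rw [integral_add (hm2.integrableOn.div_const _)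
        (integrableOn_const (measure_lt_top _ _).ne), integral_div, setIntegral_const,
        smul_eq_mul, hF0, measureReal_def]
      ring
    have hdiv : (∫ x in Iic (0:ℝ), x ^ 2 ∂ν) / (2 * a) ≤ K * F0 / (2 * a) := by
      apply div_le_div_of_nonneg_right hK h2a.le
    linarith
  have hN : ∫ x in Iic (0:ℝ), (-x) ∂ν ≤ Real.sqrt K * F0 := by
    rcases hK0.eq_or_lt with hKz | hKpos
    · rw [← hKz, Real.sqrt_zero, zero_mul]
      by_contra hcon
      push_neg at hcon
      set N := ∫ x in Iic (0:ℝ), (-x) ∂ν with hNdef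
      have ha : 0 < N / F0 := div_pos hcon hF0pos
      have hb := hNbound (N / F0) ha
      rw [← hKz] at hb
      have h1 : (0:ℝ) * F0 / (2 * (N / F0)) = 0 := by simp
      have h2 : N / F0 * F0 / 2 = N / 2 := by field_simp
      rw [h1, h2] at hb
      linarith
    · have hb := hNbound (Real.sqrt K) (Real.sqrt_pos.2 hKpos)
      have hsq : Real.sqrt K * Real.sqrt K = K := Real.mul_self_sqrt hK0
      have hsKne : Real.sqrt K ≠ 0 := ne_of_gt (Real.sqrt_pos.2 hKpos)
      have h1 : K * F0 / (2 * Real.sqrt K) = Real.sqrt K * F0 / 2 := by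
        rw [div_eq_div_iff (mul_ne_zero two_ne_zero hsKne) (two_ne_zero)]
        linear_combination (-2 : ℝ) * F0 * hsq
      linarith
  -- y ≤ C / m
  have hymC : y * m ≤ C := by
    have hIicx2 : ∫ x in Iic y, x ^ 2 ∂ν = y * ∫ x in Iic y, x ∂ν := by
      have h1 := hzero
      rw [integral_sub hm2.integrableOn (hm1.const_mul y).integrableOn,
        integral_const_mul, sub_eq_zero] at h1
      exact h1
    have hsplit : ∫ x, x ∂ν = ∫ x in Iic y, x ∂ν + ∫ x in Ioi y, x ∂ν := by
      have h0 := integral_add_compl (measurableSet_Iic (a := y)) hm1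
      rw [compl_Iic] at h0
      linarith
    have htail : ∫ x in Ioi y, y * x ∂ν ≤ ∫ x in Ioi y, x ^ 2 ∂ν := by
      refine setIntegral_mono_on (hm1.const_mul y).integrableOn hm2.integrableOn
        measurableSet_Ioi ?_
      intro x hx
      have hyx : y < x := hx
      have hx0 : (0:ℝ) ≤ x := le_trans hy hyx.le
      calc y * x ≤ x * x := mul_le_mul_of_nonneg_right hyx.le hx0
        _ = x ^ 2 := (pow_two x).symm
    have hsplit2 : ∫ x, x ^ 2 ∂ν = ∫ x in Iic y, x ^ 2 ∂ν + ∫ x in Ioi y, x ^ 2 ∂ν := by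
      have h0 := integral_add_compl (measurableSet_Iic (a := y)) hm2
      rw [compl_Iic] at h0
      linarith
    have hconst : ∫ x in Ioi y, y * x ∂ν = y * ∫ x in Ioi y, x ∂ν := integral_const_mul _ _
    have h1 : y * ∫ x, x ∂ν ≤ ∫ x, x ^ 2 ∂ν := by
      rw [hsplit, hsplit2, mul_add, ← hIicx2, ← hconst]
      linarith [htail]
    have h2 : y * m ≤ y * ∫ x, x ∂ν := mul_le_mul_of_nonneg_left hmean hy
    linarith
  -- A ≤ (K + C√K/m) F0
  have hA : ∫ x in Iic (0:ℝ), (x ^ 2 - y * x) ∂ν ≤ (K + C * Real.sqrt K / m) * F0 := by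
    have hyC : y ≤ C / m := by rw [le_div_iff₀ hm]; linarith
    have hNnn : 0 ≤ ∫ x in Iic (0:ℝ), (-x) ∂ν :=
      setIntegral_nonneg measurableSet_Iic fun x hx => neg_nonneg.2 hx
    have h1 : y * ∫ x in Iic (0:ℝ), (-x) ∂ν ≤ (C / m) * (Real.sqrt K * F0) :=
      mul_le_mul hyC hN hNnn (div_nonneg hC0 hm.le)
    have h2 : (K + C * Real.sqrt K / m) * F0 = K * F0 + (C / m) * (Real.sqrt K * F0) := by
      ring
    rw [hAeq, h2]
    linarith
  -- middle interval mass
  have hmid : p - 2 * (M * δ) ≤ (ν (Ioc δ (y - δ))).toReal := by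
    have h1 : (ν (Ioc δ (y - δ))).toReal = (ν (Iic (y - δ))).toReal - (ν (Iic δ)).toReal :=
      measIocReal ν (by linarith)
    have h2 := hconc 0 δ le_rfl hδ
    rw [zero_add] at h2
    have h3 := hconc (y - δ) δ (by linarith) hδ
    have h4 : y - δ + δ = y := by ring
    rw [h4] at h3
    linarith [hIoc0y]
  -- lower bound on B
  have hBlow : δ ^ 2 * ((ν (Ioc δ (y - δ))).toReal) ≤ ∫ x in Ioc (0:ℝ) y, (y * x - x ^ 2) ∂ν := by
    have hsubset : Ioc δ (y - δ) ⊆ Ioc 0 y := Ioc_subset_Ioc hδ.le (by linarith)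
    have hstep : δ ^ 2 * ((ν (Ioc δ (y - δ))).toReal)
        ≤ ∫ x in Ioc δ (y - δ), (y * x - x ^ 2) ∂ν := by
      rw [show δ ^ 2 * ((ν (Ioc δ (y - δ))).toReal) = ν.real (Ioc δ (y - δ)) • δ ^ 2 by
        rw [smul_eq_mul, measureReal_def, mul_comm]]
      refine setIntegral_ge_of_const_le measurableSet_Ioc (measure_ne_top _ _) ?_ hg.integrableOn
      intro x hx
      obtain ⟨hx1, hx2⟩ := hx
      have hmm : δ * δ ≤ x * (y - x) :=
        mul_le_mul hx1.le (by linarith : δ ≤ y - x) hδ.le (by linarith : (0:ℝ) ≤ x)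
      calc δ ^ 2 = δ * δ := pow_two δ
        _ ≤ x * (y - x) := hmm
        _ = y * x - x ^ 2 := by ring
    refine hstep.trans (setIntegral_mono_set hg.integrableOn ?_ hsubset.eventuallyLE)
    filter_upwards [ae_restrict_mem measurableSet_Ioc] with x hx
    obtain ⟨hx1, hx2⟩ := hx
    simp only [Pi.zero_apply]
    have h0 : 0 ≤ x * (y - x) := mul_nonneg hx1.le (by linarith)
    have hmm : x * (y - x) = y * x - x ^ 2 := by ring
    linarith
  have hchain : δ ^ 2 * (p - 2 * (M * δ)) ≤ (K + C * Real.sqrt K / m) * F0 := by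
    have h1 : δ ^ 2 * (p - 2 * (M * δ)) ≤ δ ^ 2 * ((ν (Ioc δ (y - δ))).toReal) :=
      mul_le_mul_of_nonneg_left hmid (sq_nonneg δ)
    calc δ ^ 2 * (p - 2 * (M * δ)) ≤ δ ^ 2 * ((ν (Ioc δ (y - δ))).toReal) := h1
      _ ≤ ∫ x in Ioc (0:ℝ) y, (y * x - x ^ 2) ∂ν := hBlow
      _ = ∫ x in Iic (0:ℝ), (x ^ 2 - y * x) ∂ν := hB
      _ ≤ (K + C * Real.sqrt K / m) * F0 := hA
  have hMne : M ≠ 0 := ne_of_gt hM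
  have hp3 : p ^ 3 ≤ 27 * (K + C * Real.sqrt K / m) * M ^ 2 * F0 := by
    have h1 : p ^ 3 = δ ^ 2 * (p - 2 * (M * δ)) * (27 * M ^ 2) := by
      rw [hδeq]; ring
    have h3 := mul_le_mul_of_nonneg_right hchain
      (by positivity : (0:ℝ) ≤ 27 * M ^ 2)
    calc p ^ 3 = δ ^ 2 * (p - 2 * (M * δ)) * (27 * M ^ 2) := h1
      _ ≤ (K + C * Real.sqrt K / m) * F0 * (27 * M ^ 2) := h3
      _ = 27 * (K + C * Real.sqrt K / m) * M ^ 2 * F0 := by ring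
  have hfinal : p ≤ (27 * (K + C * Real.sqrt K / m) * M ^ 2) ^ ((1:ℝ)/3) * F0 ^ ((1:ℝ)/3) := by
    have h1 : ((p ^ 3 : ℝ)) ^ ((1:ℝ)/3) = p := by
      have h2 : (p ^ 3 : ℝ) = p ^ (3:ℝ) := by
        rw [← Real.rpow_natCast p 3]; norm_num
      rw [h2, ← Real.rpow_mul hppos.le]
      norm_num
    rw [← h1, ← Real.mul_rpow hΘ hF0nn]
    exact Real.rpow_le_rpow (by positivity) hp3 (by norm_num)
  linarith

/-- **Theorem: continuity of the limiting active ratio at zero.**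
Let `(μ n)` be a sequence of Borel probability measures on `ℝ` with cdfs `F n`,
satisfying: `0 < F_n(0) → 0`; uniformly positive means `E_{F_n}[X] ≥ m > 0`; uniform
second moments `E_{F_n}[X²] ≤ C`; uniform conditional negative-tail second moments
`E_{F_n}[X² | X ≤ 0] ≤ K`; and the concentration bounds `F_n(x+t) − F_n(x) ≤ M·t`
for `x ≥ 0`, `t > 0`.  If `y_n* ≥ 0` is a zero of
`G_n(y) = ∫_{(-∞,y]}(x² − yx) dμ_n`, then
`F_n(y_n*) ≤ F_n(0) + Θ^{1/3}·F_n(0)^{1/3}` with `Θ = 27(K + C√K/m)M²`; in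
particular `F_n(y_n*) → 0` as `n → ∞`. -/
theorem active_ratio_continuity_at_zero
    (μ : ℕ → Measure ℝ) (hprob : ∀ n, IsProbabilityMeasure (μ n))
    (F : ℕ → ℝ → ℝ) (hF : ∀ n y, F n y = (μ n (Set.Iic y)).toReal)
    -- (1) vanishing mass on (−∞, 0]
    (hFpos : ∀ n, 0 < F n 0)
    (hF0 : Tendsto (fun n => F n 0) atTop (nhds 0))
    -- (2) uniformly positive mean
    (hmom1 : ∀ n, Integrable (fun x : ℝ => x) (μ n))
    (m : ℝ) (hm : 0 < m) (hmean : ∀ n, m ≤ ∫ x, x ∂μ n)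
    -- (3) uniform second moment, conditional negative-tail second moment,
    --     and concentration bounds
    (hmom2 : ∀ n, Integrable (fun x : ℝ => x ^ 2) (μ n))
    (C : ℝ) (hC : ∀ n, ∫ x, x ^ 2 ∂μ n ≤ C)
    (K : ℝ) (hK : ∀ n, ∫ x in Set.Iic 0, x ^ 2 ∂μ n ≤ K * F n 0)
    (M : ℝ) (hconc : ∀ n, ∀ x t : ℝ, 0 ≤ x → 0 < t → F n (x + t) - F n x ≤ M * t)
    -- y_n* is a zero of G_n
    (G : ℕ → ℝ → ℝ)
    (hG : ∀ n y, G n y = ∫ x in Set.Iic y, (x ^ 2 - y * x) ∂μ n)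
    (ystar : ℕ → ℝ) (hy0 : ∀ n, 0 ≤ ystar n) (hyzero : ∀ n, G n (ystar n) = 0) :
    (∀ n, F n (ystar n)
        ≤ F n 0 + (27 * (K + C * Real.sqrt K / m) * M ^ 2) ^ ((1 : ℝ) / 3)
            * (F n 0) ^ ((1 : ℝ) / 3))
    ∧ Tendsto (fun n => F n (ystar n)) atTop (nhds 0) := by
  have key : ∀ n, F n (ystar n)
      ≤ F n 0 + (27 * (K + C * Real.sqrt K / m) * M ^ 2) ^ ((1 : ℝ) / 3)
          * (F n 0) ^ ((1 : ℝ) / 3) := by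
    intro n
    haveI := hprob n
    have hK' := hK n
    rw [hF n 0] at hK'
    have hFpos' := hFpos n
    rw [hF n 0] at hFpos'
    have hconc' : ∀ x t : ℝ, 0 ≤ x → 0 < t →
        (μ n (Set.Iic (x + t))).toReal - (μ n (Set.Iic x)).toReal ≤ M * t := by
      intro x t hx ht
      have h1 := hconc n x t hx ht
      rwa [hF n (x + t), hF n x] at h1
    have hzero' := hyzero n
    rw [hG] at hzero'
    rw [hF n (ystar n), hF n 0]
    exact aux_bound (μ n) (hmom1 n) (hmom2 n) m C K M (ystar n) hm (hmean n) (hC n)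
      hK' hFpos' hconc' (hy0 n) hzero'
  refine ⟨key, ?_⟩
  have hnonneg : ∀ n, 0 ≤ F n (ystar n) := fun n => by
    rw [hF]; exact ENNReal.toReal_nonneg
  have hupper : Tendsto (fun n => F n 0
      + (27 * (K + C * Real.sqrt K / m) * M ^ 2) ^ ((1 : ℝ) / 3)
          * (F n 0) ^ ((1 : ℝ) / 3)) atTop (nhds 0) := by
    have h1 : Tendsto (fun n => (F n 0) ^ ((1:ℝ)/3)) atTop (nhds 0) := by
      have hc : ContinuousAt (fun x : ℝ => x ^ ((1:ℝ)/3)) 0 :=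
        Real.continuousAt_rpow_const 0 _ (Or.inr (by norm_num))
      have h2 := hc.tendsto.comp hF0
      simpa [Function.comp_def, Real.zero_rpow (by norm_num : ((1:ℝ)/3) ≠ 0)] using h2
    have h3 := hF0.add (h1.const_mul ((27 * (K + C * Real.sqrt K / m) * M ^ 2) ^ ((1 : ℝ) / 3)))
    simpa using h3
  exact tendsto_of_tendsto_of_tendsto_of_le_of_le tendsto_const_nhds hupper hnonneg key
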